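/- Let T > 0 and α ∈ (1/2, 1]. Let (Ω, F, P) be a probability space and, for each integer m ≥ 1, let ξ_{1,m}, …, ξ_{⌊mT⌋,m} be random variables satisfying condition (H2): there is a constant C₀ > 0 (independent of m) with E[|Σ_{i=j+1}^{k} ξ_{i,m}|^4] ≤ C₀ ((k−j)/m)² for all 0 ≤ j < k ≤ ⌊mT⌋. Let f : Ω × [0,T] → ℝ be such that f(·, t) is measurable for each t and, for P-almost every ω, the path f(ω, ·) is α-Hölder continuous on [0,T]. Then for every ε > 0: lim_{n→∞} limsup_{m→∞, m ≥ n} P( sup_{t ∈ [0,T]} | Σ_{i ∈ I_n(⌊nt⌋+1)} (f(·, t_i) − f(·, u_{⌊nt⌋})) ξ_{i,m} | > ε ) = 0. -/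

import Mathlib

open MeasureTheory Finset Filter
open scoped ENNReal NNReal

section AuxStmt14

variable {Ω : Type} [MeasurableSpace Ω] {μ : Measure Ω}

private lemma aux_rpow4 (x : ℝ≥0∞) : x ^ (4:ℝ) = x ^ (4:ℕ) := by
  rw [← ENNReal.rpow_natCast]; norm_num

private lemma aux_enorm_pow (x : ℝ) : (‖x‖₊ : ℝ≥0∞) ^ (4:ℝ) = ENNReal.ofReal (|x| ^ 4) := by
  rw [aux_rpow4, ← enorm_eq_nnnorm, ← ofReal_norm, ← ENNReal.ofReal_pow (norm_nonneg x),
    Real.norm_eq_abs]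

private lemma aux_eLpNorm_le_of_moment {g : Ω → ℝ} {c : ℝ} (hc : 0 ≤ c)
    (h : (∫⁻ ω, ENNReal.ofReal (|g ω| ^ 4) ∂μ) ≤ ENNReal.ofReal (c ^ 4)) :
    eLpNorm g 4 μ ≤ ENNReal.ofReal c := by
  rw [eLpNorm_eq_lintegral_rpow_enorm_toReal (by norm_num) (by norm_num)]
  have h4 : (4 : ℝ≥0∞).toReal = (4:ℝ) := by norm_num
  rw [h4]
  simp_rw [enorm_eq_nnnorm, aux_enorm_pow]
  have hc4 : ENNReal.ofReal (c ^ 4) = (ENNReal.ofReal c) ^ (4:ℝ) := by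
    rw [aux_rpow4, ENNReal.ofReal_pow hc]
  calc (∫⁻ ω, ENNReal.ofReal (|g ω| ^ 4) ∂μ) ^ (1/(4:ℝ))
      ≤ ((ENNReal.ofReal c) ^ (4:ℝ)) ^ (1/(4:ℝ)) := by
        rw [← hc4]; exact ENNReal.rpow_le_rpow h (by norm_num)
    _ = ENNReal.ofReal c := by
        rw [← ENNReal.rpow_mul]; norm_num

private lemma aux_markov {g : Ω → ℝ} (hg : AEStronglyMeasurable g μ) {ε c : ℝ}
    (hε : 0 < ε) (h : eLpNorm g 4 μ ≤ ENNReal.ofReal c) (hc : 0 ≤ c) :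
    μ {ω | ε ≤ |g ω|} ≤ ENNReal.ofReal ((c / ε) ^ 4) := by
  have hne : (ENNReal.ofReal ε) ≠ 0 := by simp [hε]
  have bd := meas_ge_le_mul_pow_eLpNorm_enorm μ (p := 4) (by norm_num) (by norm_num) hg hne (by simp)
  have hset : {ω | ε ≤ |g ω|} = {x | ENNReal.ofReal ε ≤ ‖g x‖ₑ} := by
    ext x
    simp only [Set.mem_setOf_eq, ← ofReal_norm, Real.norm_eq_abs]
    rw [ENNReal.ofReal_le_ofReal_iff (abs_nonneg _)]
  rw [hset]
  refine bd.trans ?_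
  have h4 : (4 : ℝ≥0∞).toReal = (4:ℝ) := by norm_num
  rw [h4]
  have h1 : (ENNReal.ofReal ε)⁻¹ ^ (4:ℝ) = ENNReal.ofReal (ε⁻¹ ^ 4) := by
    rw [← ENNReal.ofReal_inv_of_pos hε, aux_rpow4, ENNReal.ofReal_pow (by positivity)]
  have h2 : eLpNorm g 4 μ ^ (4:ℝ) ≤ ENNReal.ofReal (c ^ 4) := by
    calc eLpNorm g 4 μ ^ (4:ℝ) ≤ (ENNReal.ofReal c) ^ (4:ℝ) :=
          ENNReal.rpow_le_rpow h (by norm_num)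
      _ = ENNReal.ofReal (c ^ 4) := by rw [aux_rpow4, ENNReal.ofReal_pow hc]
  calc (ENNReal.ofReal ε)⁻¹ ^ (4:ℝ) * eLpNorm g 4 μ ^ (4:ℝ)
      ≤ ENNReal.ofReal (ε⁻¹ ^ 4) * ENNReal.ofReal (c ^ 4) := by
        rw [h1]; exact mul_le_mul_right h2 _
    _ = ENNReal.ofReal ((c/ε)^4) := by
        rw [← ENNReal.ofReal_mul (by positivity)]
        congr 1; field_simp

private lemma aux_eLpNorm_mul_le {g h : Ω → ℝ} {c₀ : ℝ} (hc₀ : 0 ≤ c₀)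
    (hpt : ∀ ω, ‖h ω‖ ≤ c₀ * ‖g ω‖) {c : ℝ}
    (hg : eLpNorm g 4 μ ≤ ENNReal.ofReal c) :
    eLpNorm h 4 μ ≤ ENNReal.ofReal (c₀ * c) := by
  have h1 : eLpNorm h 4 μ ≤ eLpNorm (c₀ • g) 4 μ := by
    apply eLpNorm_mono
    intro x
    rw [Pi.smul_apply, smul_eq_mul, norm_mul, Real.norm_of_nonneg hc₀]
    exact hpt x
  have h2 : eLpNorm (c₀ • g) 4 μ = (‖c₀‖₊ : ℝ≥0∞) * eLpNorm g 4 μ := by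
    rw [eLpNorm_const_smul]; rfl
  refine h1.trans ?_
  rw [h2, ENNReal.ofReal_mul hc₀]
  have e : (‖c₀‖₊ : ℝ≥0∞) = ENNReal.ofReal c₀ := by
    rw [← enorm_eq_nnnorm, ← ofReal_norm, Real.norm_of_nonneg hc₀]
  rw [e]
  exact mul_le_mul_right hg _

private lemma aux_ceil_le {a n i : ℕ} (hn : 0 < n) : (a + n - 1)/n ≤ i ↔ a ≤ i * n := by
  have h1 : i + 1 ≤ (a + n - 1) / n ↔ i * n + n ≤ a + n - 1 := by
    rw [Nat.le_div_iff_mul_le hn, add_one_mul]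
  generalize (a + n - 1)/n = d at h1 ⊢
  generalize i * n = p at h1 ⊢
  omega

private lemma aux_le_pred_div {q n i : ℕ} (hn : 0 < n) (hq : 0 < q) :
    i ≤ (q - 1)/n ↔ i * n < q := by
  have h1 : i ≤ (q-1)/n ↔ i * n ≤ q - 1 := Nat.le_div_iff_mul_le hn
  generalize (q-1)/n = d at h1 ⊢
  generalize i * n = p at h1 ⊢
  omega

end AuxStmt14

set_option maxHeartbeats 2000000 in
/-- Convergence of the last (incomplete) block term: for `T > 0`, `α ∈ (1/2,1]`, random
weights `ξ_{i,m}` satisfying (H2) and a process `f` with measurable marginals and a.e.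
α-Hölder paths,
`lim_{n→∞} limsup_{m→∞} P( sup_{t ∈ [0,T]}
  |∑_{i ∈ I_n(⌊nt⌋+1)} (f(·,t_i) - f(·,u_{⌊nt⌋})) ξ_{i,m}| > ε ) = 0` for every `ε > 0`. -/
theorem stmt_14 (T α : ℝ) (hT : 0 < T) (hα : 1 / 2 < α) (hα1 : α ≤ 1)
    (Ω : Type) (m0 : MeasurableSpace Ω) (μ : Measure Ω) (hμ : IsProbabilityMeasure μ)
    (ξ : ℕ → ℕ → Ω → ℝ) (hmeas : ∀ m i : ℕ, Measurable (ξ m i))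
    (C₀ : ℝ) (hC₀ : 0 < C₀)
    (hH2 : ∀ m : ℕ, 1 ≤ m → ∀ j k : ℕ, j < k → k ≤ ⌊(m : ℝ) * T⌋₊ →
      (∫⁻ ω, ENNReal.ofReal (|∑ i ∈ Finset.Icc (j + 1) k, ξ m i ω| ^ 4) ∂μ)
        ≤ ENNReal.ofReal (C₀ * (((k : ℝ) - (j : ℝ)) / m) ^ 2))
    (f : Ω → ℝ → ℝ) (hfmeas : ∀ t : ℝ, Measurable fun ω => f ω t)
    (hfHolder : ∀ᵐ ω ∂μ, ∃ H : ℝ, ∀ u ∈ Set.Icc (0 : ℝ) T, ∀ v ∈ Set.Icc (0 : ℝ) T,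
      |f ω u - f ω v| ≤ H * |u - v| ^ α) :
    ∀ ε : ℝ, 0 < ε →
      Tendsto (fun n : ℕ =>
        limsup (fun m : ℕ =>
          μ {ω : Ω | ε < ⨆ t : Set.Icc (0 : ℝ) T,
            |∑ i ∈ (Finset.Icc 1 ⌊(m : ℝ) * T⌋₊).filter
                (fun i : ℕ =>
                  ((⌊(n : ℝ) * (t : ℝ)⌋₊ + 1 : ℕ) - 1 : ℝ) / n ≤ (i : ℝ) / m ∧
                    (i : ℝ) / m < ((⌊(n : ℝ) * (t : ℝ)⌋₊ + 1 : ℕ) : ℝ) / n),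
              (f ω ((i : ℝ) / m) - f ω ((⌊(n : ℝ) * (t : ℝ)⌋₊ : ℝ) / (n : ℝ))) * ξ m i ω|}) atTop)
        atTop (nhds 0) := by
  intro ε hε
  have hα0 : (0:ℝ) < α := by linarith
  -- the truncation sets
  set Bs : ℕ → Set Ω := fun K => {ω | ∀ q r : ℚ, 0 ≤ (q:ℝ) → (q:ℝ) ≤ T → 0 ≤ (r:ℝ) →
      (r:ℝ) ≤ T → |f ω (q:ℝ) - f ω (r:ℝ)| ≤ (K:ℝ) * |(q:ℝ) - (r:ℝ)| ^ α} with hBsdef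
  have hBmeas : ∀ K : ℕ, MeasurableSet (Bs K) := by
    intro K
    have hrw : Bs K = ⋂ (q : ℚ) (r : ℚ) (_ : 0 ≤ (q:ℝ)) (_ : (q:ℝ) ≤ T) (_ : 0 ≤ (r:ℝ))
        (_ : (r:ℝ) ≤ T), {ω | |f ω (q:ℝ) - f ω (r:ℝ)| ≤ (K:ℝ) * |(q:ℝ) - (r:ℝ)| ^ α} := by
      ext ω
      simp only [hBsdef, Set.mem_iInter, Set.mem_setOf_eq]
    rw [hrw]
    refine MeasurableSet.iInter fun q => MeasurableSet.iInter fun r => ?_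
    refine MeasurableSet.iInter fun _ => MeasurableSet.iInter fun _ => ?_
    refine MeasurableSet.iInter fun _ => MeasurableSet.iInter fun _ => ?_
    exact measurableSet_le (((hfmeas _).sub (hfmeas _)).abs) measurable_const
  have hBnull : μ (⋂ K : ℕ, (Bs K)ᶜ) = 0 := by
    have hae : ∀ᵐ ω ∂μ, ω ∈ ⋃ K : ℕ, Bs K := by
      filter_upwards [hfHolder] with ω hω
      obtain ⟨H, hH⟩ := hω
      refine Set.mem_iUnion.2 ⟨⌈H⌉₊, ?_⟩
      intro q r hq hqT hr hrT
      refine (hH q ⟨hq, hqT⟩ r ⟨hr, hrT⟩).trans ?_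
      exact mul_le_mul_of_nonneg_right (Nat.le_ceil H) (Real.rpow_nonneg (abs_nonneg _) α)
    rw [← Set.compl_iUnion]
    exact (MeasureTheory.ae_iff).mp hae
  have hBtendsto : Tendsto (fun K : ℕ => μ (Bs K)ᶜ) atTop (nhds 0) := by
    have hmono : ∀ K K' : ℕ, K ≤ K' → Bs K ⊆ Bs K' := by
      intro K K' hKK ω hω q r hq hqT hr hrT
      refine (hω q r hq hqT hr hrT).trans ?_
      exact mul_le_mul_of_nonneg_right (by exact_mod_cast hKK)
        (Real.rpow_nonneg (abs_nonneg _) α)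
    have ht := tendsto_measure_iInter_atTop (μ := μ) (s := fun K => (Bs K)ᶜ)
      (fun K => ((hBmeas K).compl).nullMeasurableSet)
      (fun K K' h => Set.compl_subset_compl.2 (hmono K K' h))
      ⟨0, measure_ne_top μ _⟩
    rw [hBnull] at ht
    exact ht
  rw [ENNReal.tendsto_nhds_zero]
  intro δ hδ
  obtain ⟨K, hKb⟩ : ∃ K : ℕ, μ (Bs K)ᶜ ≤ δ / 2 := by
    obtain ⟨K, hK⟩ := (hBtendsto.eventually_lt_const (ENNReal.half_pos hδ.ne')).exists
    exact ⟨K, hK.le⟩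
  -- constants
  set ρ : ℝ := (2:ℝ) ^ ((1:ℝ)/2 - α) with hρdef
  have hρpos : 0 < ρ := Real.rpow_pos_of_pos (by norm_num) _
  have hρlt : ρ < 1 := Real.rpow_lt_one_of_one_lt_of_neg (by norm_num) (by linarith)
  set C4 : ℝ := C₀ ^ ((1:ℝ)/4) with hC4def
  have hC4pos : 0 < C4 := Real.rpow_pos_of_pos hC₀ _
  have hC44 : C4 ^ (4:ℕ) = C₀ := by
    rw [hC4def, ← Real.rpow_natCast (C₀ ^ ((1:ℝ)/4)) 4, ← Real.rpow_mul hC₀.le]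
    norm_num
  set A : ℝ := (K:ℝ) * C4 / (1 - ρ) with hAdef
  have hA0 : 0 ≤ A := div_nonneg (by positivity) (by linarith)
  have hArec : (K:ℝ) * C4 = A * (1 - ρ) := by
    rw [hAdef, div_mul_cancel₀ _ (by linarith : (1:ℝ) - ρ ≠ 0)]
  have hAge : (K:ℝ) * C4 ≤ A := by nlinarith [mul_nonneg hA0 hρpos.le]
  set A₂ : ℝ := (A + (K:ℝ) * C4) * (4:ℝ) ^ (α + 1/2) with hA₂def
  have hA₂0 : 0 ≤ A₂ := by
    have : (0:ℝ) ≤ (4:ℝ) ^ (α + 1/2) := Real.rpow_nonneg (by norm_num) _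
    nlinarith [mul_nonneg (mul_nonneg (Nat.cast_nonneg K) hC4pos.le) this, hA0]
  -- the core uniform-in-m bound
  have core : ∀ n m : ℕ, 1 ≤ n → n ≤ m →
      μ {ω : Ω | ε < ⨆ t : Set.Icc (0 : ℝ) T,
            |∑ i ∈ (Finset.Icc 1 ⌊(m : ℝ) * T⌋₊).filter
                (fun i : ℕ =>
                  ((⌊(n : ℝ) * (t : ℝ)⌋₊ + 1 : ℕ) - 1 : ℝ) / n ≤ (i : ℝ) / m ∧
                    (i : ℝ) / m < ((⌊(n : ℝ) * (t : ℝ)⌋₊ + 1 : ℕ) : ℝ) / n),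
              (f ω ((i : ℝ) / m) - f ω ((⌊(n : ℝ) * (t : ℝ)⌋₊ : ℝ) / (n : ℝ))) * ξ m i ω|}
        ≤ μ (Bs K)ᶜ + ((⌊(n:ℝ)*T⌋₊ + 1 : ℕ) : ℝ≥0∞) *
            ENNReal.ofReal ((A₂ * ((1:ℝ)/n) ^ (α + 1/2) / ε)^4) := by
    intro n m hn1 hnm
    have hm1 : 1 ≤ m := hn1.trans hnm
    have hm0 : 0 < m := hm1
    have hn0 : 0 < n := hn1
    have hmpos : (0:ℝ) < m := by exact_mod_cast hm0
    have hnpos : (0:ℝ) < n := by exact_mod_cast hn0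
    set M : ℕ := ⌊(m:ℝ)*T⌋₊ with hMdef
    set lo : ℕ → ℕ := fun k => max 1 ((k*m + n - 1)/n) with hlodef
    set hi : ℕ → ℕ := fun k => min M (((k+1)*m - 1)/n) with hhidef
    have hlo1 : ∀ k, 1 ≤ lo k := fun k => le_max_left _ _
    have hfilter : ∀ k : ℕ,
        (Finset.Icc 1 M).filter (fun i : ℕ =>
            ((k + 1 : ℕ) - 1 : ℝ) / n ≤ (i : ℝ) / m ∧ (i : ℝ) / m < ((k + 1 : ℕ) : ℝ) / n)
          = Finset.Ioc (lo k - 1) (hi k) := by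
      intro k
      ext i
      simp only [Finset.mem_filter, Finset.mem_Icc, Finset.mem_Ioc]
      have e1 : ((k + 1 : ℕ) - 1 : ℝ) = (k:ℝ) := by push_cast; ring
      have c1 : ((k + 1 : ℕ) - 1 : ℝ) / n ≤ (i : ℝ) / m ↔ k * m ≤ i * n := by
        rw [e1, div_le_div_iff₀ hnpos hmpos]
        constructor
        · intro h; exact_mod_cast h
        · intro h; exact_mod_cast h
      have c2 : (i : ℝ) / m < ((k + 1 : ℕ) : ℝ) / n ↔ i * n < (k+1) * m := by
        rw [div_lt_div_iff₀ hmpos hnpos]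
        constructor
        · intro h; exact_mod_cast h
        · intro h; exact_mod_cast h
      rw [c1, c2]
      have h1 : (k*m + n - 1)/n ≤ i ↔ k*m ≤ i * n := aux_ceil_le hn0
      have h2 : i ≤ ((k+1)*m - 1)/n ↔ i * n < (k+1)*m :=
        aux_le_pred_div hn0 (Nat.mul_pos (Nat.succ_pos k) hm0)
      constructor
      · rintro ⟨⟨hi1, hiM⟩, hc1, hc2⟩
        constructor
        · have hloi : lo k ≤ i := max_le hi1 (h1.mpr hc1)
          omega
        · exact le_min hiM (h2.mpr hc2)
      · rintro ⟨hgt, hle⟩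
        have hloi : lo k ≤ i := by have := hlo1 k; omega
        obtain ⟨h1i, hceil⟩ := max_le_iff.mp hloi
        obtain ⟨hiM, hpred⟩ := le_min_iff.mp hle
        exact ⟨⟨h1i, hiM⟩, h1.mp hceil, h2.mp hpred⟩
    have hgle : ∀ i : ℕ, i ≤ M → (i:ℝ)/m ≤ T := by
      intro i hiM
      rw [div_le_iff₀ hmpos]
      calc (i:ℝ) ≤ (M:ℝ) := by exact_mod_cast hiM
        _ ≤ (m:ℝ)*T := Nat.floor_le (by positivity)
        _ = T * m := by ring
    have hQ : ∀ ω, ω ∈ Bs K → ∀ (a b c d : ℕ), 0 < b → 0 < d → (a:ℝ)/b ≤ T → (c:ℝ)/d ≤ T →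
        |f ω ((a:ℝ)/b) - f ω ((c:ℝ)/d)| ≤ (K:ℝ) * |(a:ℝ)/b - (c:ℝ)/d| ^ α := by
      intro ω hω a b c d hb hd hT1 hT2
      have e1 : (((a:ℚ)/(b:ℚ) : ℚ) : ℝ) = (a:ℝ)/b := by push_cast; ring
      have e2 : (((c:ℚ)/(d:ℚ) : ℚ) : ℝ) = (c:ℝ)/d := by push_cast; ring
      have hap := hω ((a:ℚ)/(b:ℚ)) ((c:ℚ)/(d:ℚ)) (by rw [e1]; positivity) (by rw [e1]; exact hT1)
        (by rw [e2]; positivity) (by rw [e2]; exact hT2)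
      rwa [e1, e2] at hap
    have hS : ∀ a b : ℕ, a < b → b ≤ M →
        eLpNorm (fun ω => ∑ i ∈ Finset.Ioc a b, ξ m i ω) 4 μ
          ≤ ENNReal.ofReal (C4 * Real.sqrt (((b:ℝ) - a)/m)) := by
      intro a b hab hbM
      have hcab : (a:ℝ) ≤ b := by exact_mod_cast hab.le
      have hy : (0:ℝ) ≤ ((b:ℝ) - a)/m := div_nonneg (by linarith) hmpos.le
      apply aux_eLpNorm_le_of_moment (by positivity)
      have h2 := hH2 m hm1 a b hab hbM
      rw [Finset.Icc_add_one_left_eq_Ioc] at h2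
      refine h2.trans (le_of_eq ?_)
      congr 1
      have hs4 : Real.sqrt (((b:ℝ) - a)/m) ^ (4:ℕ) = (((b:ℝ) - a)/m)^2 := by
        rw [show (4:ℕ) = 2*2 from rfl, pow_mul, Real.sq_sqrt hy]
      rw [mul_pow, hC44, hs4]
    have hmeasSum : ∀ (a b : ℕ) (c : ℝ),
        Measurable fun ω => ∑ i ∈ Finset.Ioc a b, (f ω ((i:ℝ)/m) - f ω c) * ξ m i ω :=
      fun a b c => Finset.measurable_sum _ fun i _ => ((hfmeas _).sub (hfmeas c)).mul (hmeas m i)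
    have key : ∀ (L a b : ℕ), b ≤ M → b - a ≤ 2^L →
        eLpNorm ((Bs K).indicator fun ω =>
            ∑ i ∈ Finset.Ioc a b, (f ω ((i:ℝ)/m) - f ω ((a:ℝ)/m)) * ξ m i ω) 4 μ
          ≤ ENNReal.ofReal (A * (((2:ℝ)^L)/m) ^ (α + 1/2)) := by
      intro L
      induction L with
      | zero =>
        intro a b hbM hba
        by_cases hab : b ≤ a
        · have he : Finset.Ioc a b = ∅ := Finset.Ioc_eq_empty (by omega)
          have hz : ((Bs K).indicator fun ω =>
              ∑ i ∈ Finset.Ioc a b, (f ω ((i:ℝ)/m) - f ω ((a:ℝ)/m)) * ξ m i ω) = fun _ => 0 := by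
            funext ω
            by_cases hω : ω ∈ Bs K
            · rw [Set.indicator_of_mem hω]; simp [he]
            · rw [Set.indicator_of_notMem hω]
          rw [hz, show (fun _ : Ω => (0:ℝ)) = (0 : Ω → ℝ) from rfl, eLpNorm_zero]
          exact bot_le
        · have hb : b = a + 1 := by omega
          subst hb
          have hdist1 : |((a+1:ℕ):ℝ)/m - (a:ℝ)/m| = 1/m := by
            rw [div_sub_div_same]
            push_cast
            rw [show ((a:ℝ) + 1 - a) = 1 by ring]
            rw [abs_of_pos (by positivity)]
          refine (aux_eLpNorm_mul_le (c₀ := (K:ℝ) * ((1:ℝ)/m)^α) (by positivity) ?_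
            (hS a (a+1) (by omega) hbM)).trans (ENNReal.ofReal_le_ofReal ?_)
          · intro ω
            by_cases hω : ω ∈ Bs K
            · rw [Set.indicator_of_mem hω, Real.norm_eq_abs, Real.norm_eq_abs]
              have hIoc : Finset.Ioc a (a+1) = {a+1} := by
                rw [← Finset.Icc_add_one_left_eq_Ioc, Finset.Icc_self]
              rw [hIoc, Finset.sum_singleton, Finset.sum_singleton, abs_mul]
              refine mul_le_mul_of_nonneg_right ?_ (abs_nonneg _)
              have hq := hQ ω hω (a+1) m a m hm0 hm0 (hgle (a+1) hbM) (hgle a (by omega))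
              rwa [hdist1] at hq
            · rw [Set.indicator_of_notMem hω]
              simp only [norm_zero]
              positivity
          · have e0 : ((a+1:ℕ):ℝ) - (a:ℕ) = 1 := by push_cast; ring
            rw [e0, pow_zero]
            rw [Real.sqrt_eq_rpow]
            have e1 : ((1:ℝ)/m)^α * ((1:ℝ)/m)^((1:ℝ)/2) = ((1:ℝ)/m)^(α+1/2) :=
              (Real.rpow_add (by positivity) _ _).symm
            calc (K:ℝ)*((1:ℝ)/m)^α * (C4 * ((1:ℝ)/m)^((1:ℝ)/2))
                = ((K:ℝ)*C4) * (((1:ℝ)/m)^α * ((1:ℝ)/m)^((1:ℝ)/2)) := by ring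
              _ = ((K:ℝ)*C4) * ((1:ℝ)/m)^(α+1/2) := by rw [e1]
              _ ≤ A * ((1:ℝ)/m)^(α+1/2) :=
                  mul_le_mul_of_nonneg_right hAge (Real.rpow_nonneg (by positivity) _)
      | succ L ih =>
        intro a b hbM hba
        by_cases hab : b ≤ a
        · have he : Finset.Ioc a b = ∅ := Finset.Ioc_eq_empty (by omega)
          have hz : ((Bs K).indicator fun ω =>
              ∑ i ∈ Finset.Ioc a b, (f ω ((i:ℝ)/m) - f ω ((a:ℝ)/m)) * ξ m i ω) = fun _ => 0 := by
            funext ω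
            by_cases hω : ω ∈ Bs K
            · rw [Set.indicator_of_mem hω]; simp [he]
            · rw [Set.indicator_of_notMem hω]
          rw [hz, show (fun _ : Ω => (0:ℝ)) = (0 : Ω → ℝ) from rfl, eLpNorm_zero]
          exact bot_le
        · push_neg at hab
          have h2L : 0 < 2^L := pow_pos (by norm_num) L
          have hb2 : b - a ≤ 2 * 2^L := by
            rw [pow_succ] at hba
            generalize 2^L = e at hba ⊢
            omega
          set c : ℕ := a + (b - a + 1)/2 with hcdef
          have hfacts : a ≤ c ∧ c ≤ b ∧ c - a ≤ 2^L ∧ b - c ≤ 2^L := by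
            rw [hcdef]
            generalize hE : 2^L = e at hb2 h2L ⊢
            omega
          obtain ⟨hac, hcb, hca, hbc⟩ := hfacts
          have hsplit : ∀ ω,
              (∑ i ∈ Finset.Ioc a b, (f ω ((i:ℝ)/m) - f ω ((a:ℝ)/m)) * ξ m i ω)
              = (∑ i ∈ Finset.Ioc a c, (f ω ((i:ℝ)/m) - f ω ((a:ℝ)/m)) * ξ m i ω)
                + ((∑ i ∈ Finset.Ioc c b, (f ω ((i:ℝ)/m) - f ω ((c:ℝ)/m)) * ξ m i ω)
                  + (f ω ((c:ℝ)/m) - f ω ((a:ℝ)/m)) * ∑ i ∈ Finset.Ioc c b, ξ m i ω) := by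
            intro ω
            rw [← Finset.sum_Ioc_consecutive
              (fun i => (f ω ((i:ℝ)/m) - f ω ((a:ℝ)/m)) * ξ m i ω) hac hcb]
            congr 1
            rw [Finset.mul_sum, ← Finset.sum_add_distrib]
            exact Finset.sum_congr rfl fun i _ => by ring
          have hind : ((Bs K).indicator fun ω =>
              ∑ i ∈ Finset.Ioc a b, (f ω ((i:ℝ)/m) - f ω ((a:ℝ)/m)) * ξ m i ω)
              = ((Bs K).indicator fun ω =>
                  ∑ i ∈ Finset.Ioc a c, (f ω ((i:ℝ)/m) - f ω ((a:ℝ)/m)) * ξ m i ω)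
                + (((Bs K).indicator fun ω =>
                    ∑ i ∈ Finset.Ioc c b, (f ω ((i:ℝ)/m) - f ω ((c:ℝ)/m)) * ξ m i ω)
                  + ((Bs K).indicator fun ω =>
                    (f ω ((c:ℝ)/m) - f ω ((a:ℝ)/m)) * ∑ i ∈ Finset.Ioc c b, ξ m i ω)) := by
            funext ω
            by_cases hω : ω ∈ Bs K <;>
              simp [Set.indicator_of_mem, Set.indicator_of_notMem, hω, hsplit ω]
          rw [hind]
          have hmX : AEStronglyMeasurable ((Bs K).indicator fun ω =>
              ∑ i ∈ Finset.Ioc a c, (f ω ((i:ℝ)/m) - f ω ((a:ℝ)/m)) * ξ m i ω) μ :=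
            ((hmeasSum a c _).indicator (hBmeas K)).aestronglyMeasurable
          have hmY : AEStronglyMeasurable ((Bs K).indicator fun ω =>
              ∑ i ∈ Finset.Ioc c b, (f ω ((i:ℝ)/m) - f ω ((c:ℝ)/m)) * ξ m i ω) μ :=
            ((hmeasSum c b _).indicator (hBmeas K)).aestronglyMeasurable
          have hmZ : AEStronglyMeasurable ((Bs K).indicator fun ω =>
              (f ω ((c:ℝ)/m) - f ω ((a:ℝ)/m)) * ∑ i ∈ Finset.Ioc c b, ξ m i ω) μ :=
            ((((hfmeas _).sub (hfmeas _)).mul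
              (Finset.measurable_sum _ fun i _ => hmeas m i)).indicator
                (hBmeas K)).aestronglyMeasurable
          refine le_trans (eLpNorm_add_le hmX (hmY.add hmZ) (by norm_num)) ?_
          refine le_trans (add_le_add_right (eLpNorm_add_le hmY hmZ (by norm_num)) _) ?_
          have hX := ih a c (hcb.trans hbM) hca
          have hY := ih c b hbM hbc
          set x : ℝ := ((2:ℝ)^L)/m with hxdef
          have hx : 0 < x := by rw [hxdef]; positivity
          have hxp0 : (0:ℝ) ≤ x^(α+1/2) := Real.rpow_nonneg hx.le _
          have hZ : eLpNorm ((Bs K).indicator fun ω =>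
              (f ω ((c:ℝ)/m) - f ω ((a:ℝ)/m)) * ∑ i ∈ Finset.Ioc c b, ξ m i ω) 4 μ
              ≤ ENNReal.ofReal ((K:ℝ) * x^α * (C4 * Real.sqrt x)) := by
            by_cases hcb' : c < b
            · refine (aux_eLpNorm_mul_le
                (c₀ := (K:ℝ) * x^α)
                (mul_nonneg (Nat.cast_nonneg K) (Real.rpow_nonneg hx.le _)) ?_
                (hS c b hcb' hbM)).trans (ENNReal.ofReal_le_ofReal ?_)
              · intro ω
                by_cases hω : ω ∈ Bs K
                · rw [Set.indicator_of_mem hω, Real.norm_eq_abs, Real.norm_eq_abs, abs_mul]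
                  refine mul_le_mul_of_nonneg_right ?_ (abs_nonneg _)
                  refine (hQ ω hω c m a m hm0 hm0 (hgle c (hcb.trans hbM))
                    (hgle a (by omega))).trans ?_
                  refine mul_le_mul_of_nonneg_left ?_ (Nat.cast_nonneg K)
                  refine Real.rpow_le_rpow (abs_nonneg _) ?_ hα0.le
                  rw [div_sub_div_same]
                  have hcc : ((c:ℝ) - a) = ((c-a:ℕ):ℝ) := (Nat.cast_sub hac).symm
                  rw [abs_of_nonneg (by rw [hcc]; positivity), hcc, hxdef]
                  have h1 : ((c-a:ℕ):ℝ) ≤ (2:ℝ)^L := by exact_mod_cast hca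
                  gcongr
                · rw [Set.indicator_of_notMem hω]
                  simp only [norm_zero]
                  positivity
              · have hfr : ((b:ℝ) - c)/m ≤ x := by
                  rw [hxdef]
                  have hcast : ((b:ℝ)-c) = ((b-c:ℕ):ℝ) := (Nat.cast_sub hcb).symm
                  rw [hcast]
                  have h1 : ((b-c:ℕ):ℝ) ≤ (2:ℝ)^L := by exact_mod_cast hbc
                  gcongr
                have hsqle := Real.sqrt_le_sqrt hfr
                exact mul_le_mul_of_nonneg_left (mul_le_mul_of_nonneg_left hsqle hC4pos.le)
                  (mul_nonneg (Nat.cast_nonneg K) (Real.rpow_nonneg hx.le _))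
            · have hcb2 : Finset.Ioc c b = ∅ := Finset.Ioc_eq_empty hcb'
              have hz : ((Bs K).indicator fun ω =>
                  (f ω ((c:ℝ)/m) - f ω ((a:ℝ)/m)) * ∑ i ∈ Finset.Ioc c b, ξ m i ω)
                  = fun _ => 0 := by
                funext ω
                by_cases hω : ω ∈ Bs K
                · rw [Set.indicator_of_mem hω]; simp [hcb2]
                · rw [Set.indicator_of_notMem hω]
              rw [hz, show (fun _ : Ω => (0:ℝ)) = (0 : Ω → ℝ) from rfl, eLpNorm_zero]
              exact bot_le
          refine le_trans (add_le_add hX (add_le_add hY hZ)) ?_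
          have ht2 : (0:ℝ) ≤ A*x^(α+1/2) := mul_nonneg hA0 hxp0
          have ht3 : (0:ℝ) ≤ (K:ℝ)*x^α*(C4*Real.sqrt x) :=
            mul_nonneg (mul_nonneg (Nat.cast_nonneg K) (Real.rpow_nonneg hx.le _))
              (mul_nonneg hC4pos.le (Real.sqrt_nonneg _))
          rw [← ENNReal.ofReal_add ht2 ht3, ← ENNReal.ofReal_add ht2 (add_nonneg ht2 ht3)]
          refine ENNReal.ofReal_le_ofReal ?_
          have hsq : Real.sqrt x = x^((1:ℝ)/2) := Real.sqrt_eq_rpow x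
          have hadd : x^α * x^((1:ℝ)/2) = x^(α+1/2) := (Real.rpow_add hx _ _).symm
          have h2x : ((2:ℝ)^(L+1))/m = 2*x := by rw [hxdef, pow_succ]; ring
          have hm2 : (2*x)^(α+1/2) = (2:ℝ)^(α+1/2) * x^(α+1/2) :=
            Real.mul_rpow (by norm_num) hx.le
          have h2ρ : (2:ℝ)^(α+1/2) * ρ = 2 := by
            rw [hρdef, ← Real.rpow_add (by norm_num : (0:ℝ) < 2)]
            rw [show α+1/2+(1/2-α) = (1:ℝ) by ring, Real.rpow_one]
          have h2p : (2:ℝ)^(α+1/2) = 2/ρ := by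
            rw [eq_div_iff hρpos.ne']; exact h2ρ
          have hcoef : 2*A + (K:ℝ)*C4 ≤ A * (2:ℝ)^(α+1/2) := by
            rw [h2p, show A * (2/ρ) = 2*A/ρ by ring, le_div_iff₀ hρpos]
            nlinarith [mul_nonneg (mul_nonneg hA0 (by linarith : (0:ℝ) ≤ 1-ρ))
              (by linarith : (0:ℝ) ≤ 2-ρ), hArec]
          calc A*x^(α+1/2) + (A*x^(α+1/2) + (K:ℝ)*x^α*(C4*Real.sqrt x))
              = (2*A + (K:ℝ)*C4) * x^(α+1/2) := by rw [hsq, ← hadd]; ring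
            _ ≤ (A * (2:ℝ)^(α+1/2)) * x^(α+1/2) := mul_le_mul_of_nonneg_right hcoef hxp0
            _ = A * (((2:ℝ)^(L+1))/m)^(α+1/2) := by rw [h2x, hm2]; ring
    set v : ℕ → Ω → ℝ := fun k ω => ∑ i ∈ Finset.Ioc (lo k - 1) (hi k),
        (f ω ((i:ℝ)/m) - f ω ((k:ℝ)/n)) * ξ m i ω with hvdef
    have hvmeas : ∀ k, Measurable (v k) := fun k =>
      Finset.measurable_sum _ fun i _ => ((hfmeas _).sub (hfmeas _)).mul (hmeas m i)
    have hblock : ∀ k : ℕ, k ≤ ⌊(n:ℝ)*T⌋₊ →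
        eLpNorm ((Bs K).indicator (v k)) 4 μ
          ≤ ENNReal.ofReal (A₂ * ((1:ℝ)/n) ^ (α + 1/2)) := by
      intro k hkT
      by_cases hab : hi k ≤ lo k - 1
      · have he : Finset.Ioc (lo k - 1) (hi k) = ∅ := Finset.Ioc_eq_empty (by omega)
        have hz : (Bs K).indicator (v k) = fun _ => 0 := by
          funext ω
          by_cases hω : ω ∈ Bs K
          · rw [Set.indicator_of_mem hω]; simp [hvdef, he]
          · rw [Set.indicator_of_notMem hω]
        rw [hz, show (fun _ : Ω => (0:ℝ)) = (0 : Ω → ℝ) from rfl, eLpNorm_zero]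
        exact bot_le
      · push_neg at hab
        set a : ℕ := lo k - 1 with hadef
        set b : ℕ := hi k with hbdef
        have hab' : a < b := hab
        have hbM : b ≤ M := min_le_left _ _
        have haM : a ≤ M := by omega
        have h_an : k*m ≤ (a+1) * n := by
          have h2 : (k*m + n - 1)/n ≤ a + 1 := by
            have h1 : (k*m + n - 1)/n ≤ lo k := le_max_right _ _
            have := hlo1 k
            omega
          exact (aux_ceil_le hn0).mp h2
        have h_bn : b * n < (k+1) * m := by
          have h1 : b ≤ ((k+1)*m - 1)/n := min_le_right _ _
          exact (aux_le_pred_div hn0 (Nat.mul_pos (Nat.succ_pos k) hm0)).mp h1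
        have hd : b - a ≤ m/n + 1 := by
          have h1 : (b - (a+1)) * n ≤ m - 1 := by
            have e2 : (b - (a+1)) * n = b*n - (a+1)*n := Nat.sub_mul _ _ _
            rw [e2]
            have e : (k+1)*m = k*m + m := by ring
            rw [e] at h_bn
            generalize b * n = p at h_bn ⊢
            generalize (a+1) * n = q at h_an ⊢
            generalize k * m = r at h_an h_bn ⊢
            omega
          have h2 : b - (a+1) ≤ (m-1)/n := (Nat.le_div_iff_mul_le hn0).mpr h1
          have h3 : (m-1)/n ≤ m/n := Nat.div_le_div_right (by omega)
          generalize (m-1)/n = u at h2 h3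
          generalize m/n = w at h3 ⊢
          omega
        set D : ℕ := m/n + 1 with hDdef
        have hD2 : 2 ≤ D := by
          have : 1 ≤ m/n := (Nat.one_le_div_iff hn0).mpr hnm
          omega
        set L : ℕ := Nat.clog 2 D with hLdef
        have hDL : D ≤ 2^L := Nat.le_pow_clog one_lt_two D
        have hL1 : 1 ≤ L := Nat.clog_pos one_lt_two hD2
        have hLup : 2^L ≤ 2*(m/n) := by
          have h1 : 2^(L-1) < D := Nat.pow_pred_clog_lt_self one_lt_two (by omega)
          have h2 : 2^L = 2 * 2^(L-1) := by
            conv_lhs => rw [show L = (L-1)+1 by omega]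
            rw [pow_succ]; ring
          rw [hDdef] at h1
          generalize 2^(L-1) = p at h1 h2
          generalize m/n = w at h1 ⊢
          omega
        have hxup : ((2:ℝ)^L)/m ≤ 2/n := by
          have h1 : ((2:ℝ)^L) ≤ 2*((m/n : ℕ):ℝ) := by exact_mod_cast hLup
          have h2 : ((m/n : ℕ):ℝ) ≤ (m:ℝ)/n := Nat.cast_div_le
          rw [div_le_div_iff₀ hmpos hnpos]
          calc ((2:ℝ)^L) * n ≤ (2*((m:ℝ)/n)) * n := by nlinarith
            _ = 2*m := by field_simp
        have hba2L : b - a ≤ 2^L := le_trans hd hDL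
        have hsplit : ∀ ω, v k ω
            = (∑ i ∈ Finset.Ioc a b, (f ω ((i:ℝ)/m) - f ω ((a:ℝ)/m)) * ξ m i ω)
              + (f ω ((a:ℝ)/m) - f ω ((k:ℝ)/n)) * ∑ i ∈ Finset.Ioc a b, ξ m i ω := by
          intro ω
          simp only [hvdef]
          rw [Finset.mul_sum, ← Finset.sum_add_distrib]
          exact Finset.sum_congr rfl fun i _ => by ring
        have hind : (Bs K).indicator (v k)
            = ((Bs K).indicator fun ω =>
                ∑ i ∈ Finset.Ioc a b, (f ω ((i:ℝ)/m) - f ω ((a:ℝ)/m)) * ξ m i ω)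
              + ((Bs K).indicator fun ω =>
                (f ω ((a:ℝ)/m) - f ω ((k:ℝ)/n)) * ∑ i ∈ Finset.Ioc a b, ξ m i ω) := by
          funext ω
          by_cases hω : ω ∈ Bs K <;>
            simp [Set.indicator_of_mem, Set.indicator_of_notMem, hω, hsplit ω]
        rw [hind]
        have hmeasX : AEStronglyMeasurable ((Bs K).indicator fun ω =>
            ∑ i ∈ Finset.Ioc a b, (f ω ((i:ℝ)/m) - f ω ((a:ℝ)/m)) * ξ m i ω) μ :=
          ((hmeasSum a b _).indicator (hBmeas K)).aestronglyMeasurable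
        have hmeasZ : AEStronglyMeasurable ((Bs K).indicator fun ω =>
            (f ω ((a:ℝ)/m) - f ω ((k:ℝ)/n)) * ∑ i ∈ Finset.Ioc a b, ξ m i ω) μ :=
          ((((hfmeas _).sub (hfmeas _)).mul
            (Finset.measurable_sum _ fun i _ => hmeas m i)).indicator (hBmeas K)).aestronglyMeasurable
        refine (eLpNorm_add_le hmeasX hmeasZ (by norm_num)).trans ?_
        have hXle : eLpNorm ((Bs K).indicator fun ω =>
            ∑ i ∈ Finset.Ioc a b, (f ω ((i:ℝ)/m) - f ω ((a:ℝ)/m)) * ξ m i ω) 4 μ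
            ≤ ENNReal.ofReal (A * ((2:ℝ)/n) ^ (α + 1/2)) := by
          refine (key L a b hbM hba2L).trans (ENNReal.ofReal_le_ofReal ?_)
          exact mul_le_mul_of_nonneg_left
            (Real.rpow_le_rpow (by positivity) hxup (by linarith)) hA0
        have hdist : |(a:ℝ)/m - (k:ℝ)/n| ≤ 2/n := by
          have e_an : ((k:ℝ))*m ≤ ((a:ℝ)+1)*n := by exact_mod_cast h_an
          have e_bn : ((a:ℝ)+1)*n < ((k:ℝ)+1)*m := by
            have h4 : (a+1) * n < (k+1)*m :=
              lt_of_le_of_lt (Nat.mul_le_mul (by omega : a+1 ≤ b) (le_refl n)) h_bn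
            exact_mod_cast h4
          have e2 : (k:ℝ)/n ≤ ((a:ℝ)+1)/m := by
            rw [div_le_div_iff₀ hnpos hmpos]; linarith
          have e3 : (a:ℝ)/m < ((k:ℝ)+1)/n := by
            rw [div_lt_div_iff₀ hmpos hnpos]; nlinarith
          have e4 : ((a:ℝ)+1)/m = (a:ℝ)/m + 1/m := by ring
          have e5 : ((k:ℝ)+1)/n = (k:ℝ)/n + 1/n := by ring
          have e6 : (1:ℝ)/m ≤ 1/n := by
            apply one_div_le_one_div_of_le hnpos; exact_mod_cast hnm
          have e7 : (0:ℝ) < 1/n := by positivity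
          have e8 : (2:ℝ)/n = 1/n + 1/n := by ring
          rw [abs_le]
          constructor <;> linarith
        have hkT' : (k:ℝ)/n ≤ T := by
          rw [div_le_iff₀ hnpos]
          calc (k:ℝ) ≤ (⌊(n:ℝ)*T⌋₊ : ℝ) := by exact_mod_cast hkT
            _ ≤ (n:ℝ)*T := Nat.floor_le (by positivity)
            _ = T*n := by ring
        have hZle : eLpNorm ((Bs K).indicator fun ω =>
            (f ω ((a:ℝ)/m) - f ω ((k:ℝ)/n)) * ∑ i ∈ Finset.Ioc a b, ξ m i ω) 4 μ
            ≤ ENNReal.ofReal ((K:ℝ) * ((2:ℝ)/n)^α * (C4 * Real.sqrt (2/n))) := by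
          refine (aux_eLpNorm_mul_le (c₀ := (K:ℝ) * ((2:ℝ)/n)^α) (by positivity) ?_
            (hS a b hab' hbM)).trans (ENNReal.ofReal_le_ofReal ?_)
          · intro ω
            by_cases hω : ω ∈ Bs K
            · rw [Set.indicator_of_mem hω, Real.norm_eq_abs, Real.norm_eq_abs, abs_mul]
              refine mul_le_mul_of_nonneg_right ?_ (abs_nonneg _)
              refine (hQ ω hω a m k n hm0 hn0 (hgle a haM) hkT').trans ?_
              refine mul_le_mul_of_nonneg_left ?_ (Nat.cast_nonneg K)
              exact Real.rpow_le_rpow (abs_nonneg _) hdist hα0.le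
            · rw [Set.indicator_of_notMem hω]
              simp only [norm_zero]
              positivity
          · have hfrac : ((b:ℝ) - a)/m ≤ 2/n := by
              have hcast : ((b:ℝ) - a) = ((b - a : ℕ):ℝ) := by
                rw [Nat.cast_sub hab'.le]
              have h1 : ((b-a:ℕ):ℝ) ≤ (2:ℝ)^L := by exact_mod_cast hba2L
              calc ((b:ℝ)-a)/m ≤ ((2:ℝ)^L)/m := by
                    rw [hcast]; gcongr
                _ ≤ 2/n := hxup
            have hsqle := Real.sqrt_le_sqrt hfrac
            have hsq0 := Real.sqrt_nonneg (((b:ℝ)-a)/m)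
            have hrp0 : (0:ℝ) ≤ ((2:ℝ)/n)^α := Real.rpow_nonneg (by positivity) α
            exact mul_le_mul_of_nonneg_left (mul_le_mul_of_nonneg_left hsqle hC4pos.le)
              (mul_nonneg (Nat.cast_nonneg K) hrp0)
        refine (add_le_add hXle hZle).trans ?_
        rw [← ENNReal.ofReal_add (by positivity) (by positivity)]
        refine ENNReal.ofReal_le_ofReal ?_
        have hy : (0:ℝ) < 2/n := by positivity
        have hsq : Real.sqrt ((2:ℝ)/n) = ((2:ℝ)/n)^((1:ℝ)/2) := Real.sqrt_eq_rpow _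
        have hadd : ((2:ℝ)/n)^α * ((2:ℝ)/n)^((1:ℝ)/2) = ((2:ℝ)/n)^(α+1/2) :=
          (Real.rpow_add hy _ _).symm
        have h24 : ((2:ℝ)/n)^(α+1/2) ≤ (4:ℝ)^(α+1/2) * ((1:ℝ)/n)^(α+1/2) := by
          rw [← Real.mul_rpow (by norm_num) (by positivity)]
          apply Real.rpow_le_rpow hy.le ?_ (by linarith)
          rw [mul_one_div]
          gcongr
          norm_num
        have hAK0 : (0:ℝ) ≤ A + (K:ℝ)*C4 := add_nonneg hA0 (by positivity)
        calc A*((2:ℝ)/n)^(α+1/2) + (K:ℝ)*((2:ℝ)/n)^α*(C4*Real.sqrt ((2:ℝ)/n))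
            = (A + (K:ℝ)*C4) * ((2:ℝ)/n)^(α+1/2) := by
              rw [hsq, ← hadd]; ring
          _ ≤ (A + (K:ℝ)*C4) * ((4:ℝ)^(α+1/2) * ((1:ℝ)/n)^(α+1/2)) :=
              mul_le_mul_of_nonneg_left h24 hAK0
          _ = A₂ * ((1:ℝ)/n)^(α+1/2) := by rw [hA₂def]; ring
    haveI hNe : Nonempty (Set.Icc (0:ℝ) T) := ⟨⟨0, le_refl (0:ℝ), hT.le⟩⟩
    have hrange : Finset.Nonempty (Finset.range (⌊(n:ℝ)*T⌋₊ + 1)) := ⟨0, by simp⟩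
    have hsub : {ω : Ω | ε < ⨆ t : Set.Icc (0 : ℝ) T,
            |∑ i ∈ (Finset.Icc 1 M).filter
                (fun i : ℕ =>
                  ((⌊(n : ℝ) * (t : ℝ)⌋₊ + 1 : ℕ) - 1 : ℝ) / n ≤ (i : ℝ) / m ∧
                    (i : ℝ) / m < ((⌊(n : ℝ) * (t : ℝ)⌋₊ + 1 : ℕ) : ℝ) / n),
              (f ω ((i : ℝ) / m) - f ω ((⌊(n : ℝ) * (t : ℝ)⌋₊ : ℝ) / (n : ℝ))) * ξ m i ω|}
        ⊆ (Bs K)ᶜ ∪ ⋃ k ∈ Finset.range (⌊(n:ℝ)*T⌋₊ + 1),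
            {ω | ε ≤ |((Bs K).indicator (v k)) ω|} := by
      intro ω hω
      by_cases hωB : ω ∈ Bs K
      · right
        simp only [Set.mem_setOf_eq] at hω
        have hval : ∀ t : Set.Icc (0:ℝ) T,
            |∑ i ∈ (Finset.Icc 1 M).filter
                (fun i : ℕ =>
                  ((⌊(n : ℝ) * (t : ℝ)⌋₊ + 1 : ℕ) - 1 : ℝ) / n ≤ (i : ℝ) / m ∧
                    (i : ℝ) / m < ((⌊(n : ℝ) * (t : ℝ)⌋₊ + 1 : ℕ) : ℝ) / n),
              (f ω ((i : ℝ) / m) - f ω ((⌊(n : ℝ) * (t : ℝ)⌋₊ : ℝ) / (n : ℝ))) * ξ m i ω|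
              ≤ (Finset.range (⌊(n:ℝ)*T⌋₊ + 1)).sup' hrange (fun k => |v k ω|) := by
          intro t
          rw [hfilter ⌊(n : ℝ) * (t : ℝ)⌋₊]
          refine Finset.le_sup' (fun k => |v k ω|) ?_
          rw [Finset.mem_range, Nat.lt_succ_iff]
          exact Nat.floor_le_floor (mul_le_mul_of_nonneg_left t.2.2 (Nat.cast_nonneg n))
        have hlt : ε < (Finset.range (⌊(n:ℝ)*T⌋₊ + 1)).sup' hrange (fun k => |v k ω|) :=
          lt_of_lt_of_le hω (ciSup_le hval)
        obtain ⟨k, hk, hvk⟩ := (Finset.lt_sup'_iff hrange).mp hlt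
        refine Set.mem_iUnion₂.2 ⟨k, hk, ?_⟩
        rw [Set.mem_setOf_eq, Set.indicator_of_mem hωB]
        exact hvk.le
      · left; exact hωB
    refine le_trans (measure_mono hsub) ?_
    refine le_trans (measure_union_le _ _) ?_
    refine add_le_add_right ?_ _
    refine le_trans (measure_biUnion_finset_le _ _) ?_
    calc ∑ k ∈ Finset.range (⌊(n:ℝ)*T⌋₊ + 1), μ {ω | ε ≤ |((Bs K).indicator (v k)) ω|}
        ≤ ∑ k ∈ Finset.range (⌊(n:ℝ)*T⌋₊ + 1),
            ENNReal.ofReal ((A₂ * ((1:ℝ)/n) ^ (α + 1/2) / ε)^4) := by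
          refine Finset.sum_le_sum fun k hk => ?_
          have hkT : k ≤ ⌊(n:ℝ)*T⌋₊ := Nat.lt_succ_iff.mp (Finset.mem_range.mp hk)
          refine aux_markov (((hvmeas k).indicator (hBmeas K)).aestronglyMeasurable) hε
            (hblock k hkT) ?_
          exact mul_nonneg hA₂0 (Real.rpow_nonneg (by positivity) _)
      _ = ((⌊(n:ℝ)*T⌋₊ + 1 : ℕ) : ℝ≥0∞) * ENNReal.ofReal ((A₂ * ((1:ℝ)/n) ^ (α + 1/2) / ε)^4) := by
          rw [Finset.sum_const, Finset.card_range, nsmul_eq_mul]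
  -- the tail estimate
  have tail : ∀ᶠ n : ℕ in atTop, ((⌊(n:ℝ)*T⌋₊ + 1 : ℕ) : ℝ≥0∞) *
      ENNReal.ofReal ((A₂ * ((1:ℝ)/n) ^ (α + 1/2) / ε)^4) ≤ δ / 2 := by
    set δ' : ℝ≥0∞ := min (δ/2) 1 with hδ'def
    have hδ'0 : δ' ≠ 0 := (lt_min (ENNReal.half_pos hδ.ne') zero_lt_one).ne'
    have hδ'top : δ' ≠ ⊤ := ((min_le_right _ _).trans_lt ENNReal.one_lt_top).ne
    set d : ℝ := δ'.toReal with hddef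
    have hd0 : 0 < d := ENNReal.toReal_pos hδ'0 hδ'top
    set C : ℝ := (T+1) * (A₂/ε)^4 with hCdef
    have hC0 : 0 ≤ C := by positivity
    obtain ⟨N, hN⟩ := exists_nat_gt (C / d)
    filter_upwards [eventually_ge_atTop (max N 1)] with n hn
    have hn1 : 1 ≤ n := le_trans (le_max_right _ _) hn
    have hnN : N ≤ n := le_trans (le_max_left _ _) hn
    have hnpos : (0:ℝ) < n := by exact_mod_cast hn1
    have hcast1 : (1:ℝ) ≤ (n:ℝ) := by exact_mod_cast hn1
    have hr1 : ((1:ℝ)/n) ^ (α + 1/2) ≤ (1:ℝ)/n := by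
      have h0 := Real.rpow_le_rpow_of_exponent_ge (by positivity : (0:ℝ) < 1/n)
        (by rw [div_le_one hnpos]; exact hcast1) (by linarith : (1:ℝ) ≤ α + 1/2)
      rwa [Real.rpow_one] at h0
    have hfloor : ((⌊(n:ℝ)*T⌋₊ + 1 : ℕ) : ℝ) ≤ n * (T+1) := by
      push_cast
      have h1 : ((⌊(n:ℝ)*T⌋₊ : ℕ) : ℝ) ≤ n*T := Nat.floor_le (by positivity)
      nlinarith
    have hLHS : ((⌊(n:ℝ)*T⌋₊ + 1 : ℕ) : ℝ≥0∞) * ENNReal.ofReal ((A₂ * ((1:ℝ)/n) ^ (α + 1/2) / ε)^4)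
        = ENNReal.ofReal (((⌊(n:ℝ)*T⌋₊ + 1 : ℕ) : ℝ) * (A₂ * ((1:ℝ)/n) ^ (α + 1/2) / ε)^4) := by
      rw [ENNReal.ofReal_mul (by positivity), ENNReal.ofReal_natCast]
    rw [hLHS]
    have hxpos : (0:ℝ) ≤ ((1:ℝ)/n) ^ (α + 1/2) := Real.rpow_nonneg (by positivity) _
    have h2 : (A₂ * ((1:ℝ)/n) ^ (α + 1/2) / ε)^4 ≤ (A₂ * ((1:ℝ)/n) / ε)^4 := by
      apply pow_le_pow_left₀ (by positivity)
      gcongr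
    have hstep : (A₂ * ((1:ℝ)/n) / ε)^4 = (A₂/ε)^4 * ((1:ℝ)/n)^4 := by ring
    have hreal : ((⌊(n:ℝ)*T⌋₊ + 1 : ℕ) : ℝ) * (A₂ * ((1:ℝ)/n) ^ (α + 1/2) / ε)^4 ≤ d := by
      calc ((⌊(n:ℝ)*T⌋₊ + 1 : ℕ) : ℝ) * (A₂ * ((1:ℝ)/n) ^ (α + 1/2) / ε)^4
          ≤ (n*(T+1)) * ((A₂/ε)^4 * ((1:ℝ)/n)^4) := by
            rw [← hstep]; exact mul_le_mul hfloor h2 (by positivity) (by positivity)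
        _ = C * (((1:ℝ)/n)^3) := by rw [hCdef]; field_simp
        _ ≤ C * ((1:ℝ)/n) := by
            have hle1 : ((1:ℝ)/n) ≤ 1 := by rw [div_le_one hnpos]; exact hcast1
            have h0 : (0:ℝ) ≤ (1:ℝ)/n := by positivity
            apply mul_le_mul_of_nonneg_left ?_ hC0
            have h3 := pow_le_pow_of_le_one h0 hle1 (show 1 ≤ 3 by norm_num)
            simpa using h3
        _ ≤ d := by
            rw [mul_one_div, div_le_iff₀ hnpos]
            have hCN : C < N * d := (div_lt_iff₀ hd0).mp hN
            have hNn : (N:ℝ) ≤ n := by exact_mod_cast hnN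
            nlinarith
    refine (ENNReal.ofReal_le_ofReal hreal).trans ?_
    rw [hddef, ENNReal.ofReal_toReal hδ'top]
    exact min_le_left _ _
  filter_upwards [tail, eventually_ge_atTop 1] with n htail hn1
  refine Filter.limsup_le_of_le (by isBoundedDefault) ?_
  filter_upwards [eventually_ge_atTop n] with m hmn
  calc μ _ ≤ μ (Bs K)ᶜ + ((⌊(n:ℝ)*T⌋₊ + 1 : ℕ) : ℝ≥0∞) *
        ENNReal.ofReal ((A₂ * ((1:ℝ)/n) ^ (α + 1/2) / ε)^4) := core n m hn1 hmn
    _ ≤ δ/2 + δ/2 := add_le_add hKb htail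
    _ = δ := ENNReal.add_halves δ
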